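/- arXiv:1410.8283 — 2 statements merged into one kernel-verified Lean document; each statement's English description precedes it below -/
import Mathlib

section
/- Let p ≥ 4 and f ∈ C²(𝔹ⁿ; ℂ). Then at every point of 𝔹ⁿ, Δ(|f|^p) = p(p−2)|f|^{p−4} Σ_{k=1}^n |f_{z_k}·conj(f) + conj(f_{z̄_k})·f|² + 2p|f|^{p−2}‖D_f‖² + p|f|^{p−2} Re(f·conj(Δf)); in particular, if Re(f·conj(Δf)) ≥ 0 on 𝔹ⁿ, then Δ(|f|^p) ≥ 0 on 𝔹ⁿ. -/
open MeasureTheory Metric Complex Set Asymptotics ComplexConjugate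

noncomputable section

instance (n : ℕ) : MeasurableSpace (EuclideanSpace ℂ (Fin n)) := borel _
instance (n : ℕ) : BorelSpace (EuclideanSpace ℂ (Fin n)) := ⟨rfl⟩

/-- The `k`-th coordinate direction (real direction). -/
def eR (n : ℕ) (k : Fin n) : EuclideanSpace ℂ (Fin n) := EuclideanSpace.single k 1

/-- The `k`-th coordinate direction multiplied by `I` (imaginary direction). -/
def eI (n : ℕ) (k : Fin n) : EuclideanSpace ℂ (Fin n) := EuclideanSpace.single k Complex.I

/-- Wirtinger derivative `f_{z_k} = (∂f/∂x_k − i ∂f/∂y_k)/2`. -/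
def wz {n : ℕ} (f : EuclideanSpace ℂ (Fin n) → ℂ) (k : Fin n)
    (z : EuclideanSpace ℂ (Fin n)) : ℂ :=
  (fderiv ℝ f z (eR n k) - Complex.I * fderiv ℝ f z (eI n k)) / 2

/-- Wirtinger derivative `f_{z̄_k} = (∂f/∂x_k + i ∂f/∂y_k)/2`. -/
def wzb {n : ℕ} (f : EuclideanSpace ℂ (Fin n) → ℂ) (k : Fin n)
    (z : EuclideanSpace ℂ (Fin n)) : ℂ :=
  (fderiv ℝ f z (eR n k) + Complex.I * fderiv ℝ f z (eI n k)) / 2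

/-- The Laplacian `Δ = Σ_k (∂²/∂x_k² + ∂²/∂y_k²) = 4 Σ_k ∂²/∂z_k∂z̄_k`. -/
def lap {n : ℕ} {F : Type*} [NormedAddCommGroup F] [NormedSpace ℝ F]
    (f : EuclideanSpace ℂ (Fin n) → F) (z : EuclideanSpace ℂ (Fin n)) : F :=
  ∑ k : Fin n, (fderiv ℝ (fun w => fderiv ℝ f w (eR n k)) z (eR n k)
    + fderiv ℝ (fun w => fderiv ℝ f w (eI n k)) z (eI n k))

/-- `‖D_f(z)‖ = (‖∇f(z)‖² + ‖∇̄f(z)‖²)^{1/2}`, the Hilbert-Schmidt semi-norm. -/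
def Dnorm {n : ℕ} (f : EuclideanSpace ℂ (Fin n) → ℂ) (z : EuclideanSpace ℂ (Fin n)) : ℝ :=
  Real.sqrt (∑ k : Fin n, (‖wz f k z‖ ^ 2 + ‖wzb f k z‖ ^ 2))

/-- `D*_f`, built from all second-order Wirtinger derivatives. -/
def Dstar {n : ℕ} (f : EuclideanSpace ℂ (Fin n) → ℂ) (z : EuclideanSpace ℂ (Fin n)) : ℝ :=
  Real.sqrt (∑ j : Fin n, ∑ k : Fin n,
    (‖wz (wz f k) j z‖ ^ 2 + ‖wzb (wz f k) j z‖ ^ 2 +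
      ‖wz (wzb f k) j z‖ ^ 2 + ‖wzb (wzb f k) j z‖ ^ 2))

/-- Normalized Lebesgue volume measure `dV_N` on the unit ball of `ℂⁿ`. -/
def volN (n : ℕ) : Measure (EuclideanSpace ℂ (Fin n)) :=
  (volume (ball (0 : EuclideanSpace ℂ (Fin n)) 1))⁻¹ •
    (volume : Measure (EuclideanSpace ℂ (Fin n))).restrict (ball 0 1)

/-- Normalized surface measure `dσ` on the unit sphere of `ℂⁿ`. -/
def sphereN (n : ℕ) : Measure (sphere (0 : EuclideanSpace ℂ (Fin n)) 1) :=
  ((volume : Measure (EuclideanSpace ℂ (Fin n))).toSphere univ)⁻¹ •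
    (volume : Measure (EuclideanSpace ℂ (Fin n))).toSphere

/-- Membership in the generalized Hardy space `H_g^p`: `sup_{0<r<1} M_p(r,f)^p < ∞`. -/
def HgMem {n : ℕ} (p : ℝ) (f : EuclideanSpace ℂ (Fin n) → ℂ) : Prop :=
  (⨆ r ∈ Ioo (0 : ℝ) 1,
    ∫⁻ ζ, ENNReal.ofReal (‖f (r • (ζ : EuclideanSpace ℂ (Fin n)))‖ ^ p) ∂(sphereN n)) < ⊤

/-- Integral mean `M_p(r, g)` of a nonnegative function `g : 𝔹ⁿ → ℝ`. -/
def Mp {n : ℕ} (p r : ℝ) (g : EuclideanSpace ℂ (Fin n) → ℝ) : ℝ :=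
  (∫ ζ, g (r • (ζ : EuclideanSpace ℂ (Fin n))) ^ p ∂(sphereN n)) ^ (1 / p)

lemma key_alg (p C4 C2 : ℝ) (F x y AR AI : ℂ) :
    (p/2) * ((p/2) - 1) * C4 * (2 * (F.re * x.re + F.im * x.im))^2
      + (p/2) * C2 * (2 * (x.re^2 + x.im^2) + 2 * (F.re * AR.re + F.im * AR.im))
    + ((p/2) * ((p/2) - 1) * C4 * (2 * (F.re * y.re + F.im * y.im))^2
      + (p/2) * C2 * (2 * (y.re^2 + y.im^2) + 2 * (F.re * AI.re + F.im * AI.im)))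
    = p * (p-2) * C4 *
        (‖(x - Complex.I * y)/2 * conj F + conj ((x + Complex.I * y)/2) * F‖)^2
      + 2 * p * C2 * (‖(x - Complex.I * y)/2‖^2
          + ‖(x + Complex.I * y)/2‖^2)
      + p * C2 * (F * conj (AR + AI)).re := by
  simp only [Complex.sq_norm, Complex.normSq_apply, Complex.add_re, Complex.add_im,
    Complex.sub_re, Complex.sub_im, Complex.mul_re, Complex.mul_im, Complex.div_re,
    Complex.div_im, Complex.conj_re, Complex.conj_im, Complex.I_re, Complex.I_im,
    Complex.re_ofNat, Complex.im_ofNat, Complex.normSq_ofNat, map_add]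
  ring

lemma second_deriv_formula {n : ℕ} (p : ℝ) (hp : 4 ≤ p)
    (f : EuclideanSpace ℂ (Fin n) → ℂ)
    (s : Set (EuclideanSpace ℂ (Fin n))) (hs : IsOpen s)
    (hf : ContDiffOn ℝ 2 f s)
    (z : EuclideanSpace ℂ (Fin n)) (hz : z ∈ s) (v : EuclideanSpace ℂ (Fin n)) :
    fderiv ℝ (fun w => fderiv ℝ (fun w' => ‖f w'‖ ^ p) w v) z v =
      (p/2) * ((p/2) - 1) * (((f z).re^2 + (f z).im^2) ^ ((p/2) - 2)) *
        (2 * ((f z).re * (fderiv ℝ f z v).re + (f z).im * (fderiv ℝ f z v).im))^2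
      + (p/2) * (((f z).re^2 + (f z).im^2) ^ ((p/2) - 1)) *
        (2 * ((fderiv ℝ f z v).re^2 + (fderiv ℝ f z v).im^2)
          + 2 * ((f z).re * (fderiv ℝ (fun w => fderiv ℝ f w v) z v).re
                + (f z).im * (fderiv ℝ (fun w => fderiv ℝ f w v) z v).im)) := by
  set q := p/2 with hq
  have hq1 : 1 ≤ q := by rw [hq]; linarith
  have hq2 : 1 ≤ q - 1 := by rw [hq]; linarith
  have hdf : ∀ w ∈ s, HasFDerivAt f (fderiv ℝ f w) w := fun w hw =>
    ((hf.contDiffAt (hs.mem_nhds hw)).differentiableAt (by norm_num)).hasFDerivAt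
  set g : EuclideanSpace ℂ (Fin n) → ℝ := fun w => (f w).re^2 + (f w).im^2 with hgdef
  have hre : ∀ w ∈ s, HasFDerivAt (fun w => (f w).re)
      (Complex.reCLM.comp (fderiv ℝ f w)) w := fun w hw =>
    (Complex.reCLM.hasFDerivAt.comp w (hdf w hw))
  have him : ∀ w ∈ s, HasFDerivAt (fun w => (f w).im)
      (Complex.imCLM.comp (fderiv ℝ f w)) w := fun w hw =>
    (Complex.imCLM.hasFDerivAt.comp w (hdf w hw))
  have hg : ∀ w ∈ s, HasFDerivAt g
      ((2*(f w).re) • (Complex.reCLM.comp (fderiv ℝ f w))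
        + (2*(f w).im) • (Complex.imCLM.comp (fderiv ℝ f w))) w := by
    intro w hw
    have h := ((hre w hw).mul (hre w hw)).add ((him w hw).mul (him w hw))
    have e1 : g = ((fun w => (f w).re) * fun w => (f w).re) + (fun w => (f w).im) * fun w => (f w).im := by
      funext w'; simp [hgdef]; ring
    rw [e1]; refine h.congr_fderiv ?_
    module
  have hnormfun : (fun w' => ‖f w'‖ ^ p) = fun w' => g w' ^ q := by
    funext w
    have h1 : g w = ‖f w‖ ^ (2:ℕ) := by
      rw [hgdef]; rw [Complex.sq_norm,
        Complex.normSq_apply]; ring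
    rw [h1, ← Real.rpow_natCast ‖f w‖ 2, ← Real.rpow_mul (norm_nonneg _), hq,
      show ((2:ℕ):ℝ) * (p/2) = p by push_cast; ring]
  have hPhi : ∀ w ∈ s, HasFDerivAt (fun w' => g w' ^ q)
      ((q * g w ^ (q-1)) • ((2*(f w).re) • (Complex.reCLM.comp (fderiv ℝ f w))
        + (2*(f w).im) • (Complex.imCLM.comp (fderiv ℝ f w)))) w :=
    fun w hw => (Real.hasDerivAt_rpow_const (Or.inr hq1)).comp_hasFDerivAt w (hg w hw)
  have hev : (fun w => fderiv ℝ (fun w' => ‖f w'‖^p) w v) =ᶠ[nhds z]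
      (fun w => q * (g w ^ (q-1) * (2 * ((f w).re * (fderiv ℝ f w v).re
        + (f w).im * (fderiv ℝ f w v).im)))) := by
    filter_upwards [hs.mem_nhds hz] with w hw
    rw [hnormfun, (hPhi w hw).fderiv]
    simp [ContinuousLinearMap.add_apply, ContinuousLinearMap.smul_apply,
      ContinuousLinearMap.coe_comp', Function.comp, smul_eq_mul]
    ring
  rw [hev.fderiv_eq]
  have hca : ContDiffAt ℝ 2 f z := hf.contDiffAt (hs.mem_nhds hz)
  have hf2 : HasFDerivAt (fderiv ℝ f) (fderiv ℝ (fderiv ℝ f) z) z :=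
    ((hca.fderiv_right (m := 1) (by norm_num)).differentiableAt one_ne_zero).hasFDerivAt
  have happ : HasFDerivAt (fun w => fderiv ℝ f w v)
      ((ContinuousLinearMap.apply ℝ ℂ v).comp (fderiv ℝ (fderiv ℝ f) z)) z :=
    (ContinuousLinearMap.apply ℝ ℂ v).hasFDerivAt.comp z hf2
  have h1 : HasFDerivAt (fun w => g w ^ (q-1))
      (((q-1) * g z ^ (q-1-1)) • ((2*(f z).re) • (Complex.reCLM.comp (fderiv ℝ f z))
        + (2*(f z).im) • (Complex.imCLM.comp (fderiv ℝ f z)))) z :=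
    (Real.hasDerivAt_rpow_const (Or.inr hq2)).comp_hasFDerivAt z (hg z hz)
  have hreA : HasFDerivAt (fun w => (fderiv ℝ f w v).re)
      (Complex.reCLM.comp ((ContinuousLinearMap.apply ℝ ℂ v).comp (fderiv ℝ (fderiv ℝ f) z))) z :=
    Complex.reCLM.hasFDerivAt.comp z happ
  have himA : HasFDerivAt (fun w => (fderiv ℝ f w v).im)
      (Complex.imCLM.comp ((ContinuousLinearMap.apply ℝ ℂ v).comp (fderiv ℝ (fderiv ℝ f) z))) z :=
    Complex.imCLM.hasFDerivAt.comp z happ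
  have hsum := (((hre z hz).mul hreA).add ((him z hz).mul himA)).const_mul (2:ℝ)
  have hmain : HasFDerivAt (fun w => q * (g w ^ (q - 1) * (2 * ((f w).re * (fderiv ℝ f w v).re
      + (f w).im * (fderiv ℝ f w v).im)))) _ z := (h1.mul hsum).const_mul q
  rw [hmain.fderiv, happ.fderiv]
  simp only [ContinuousLinearMap.smul_apply, ContinuousLinearMap.add_apply,
    ContinuousLinearMap.coe_comp', Function.comp_apply, ContinuousLinearMap.apply_apply,
    Complex.reCLM_apply, Complex.imCLM_apply, smul_eq_mul, Pi.add_apply, Pi.mul_apply, hgdef]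
  rw [show q - 1 - 1 = q - 2 by ring]
  ring

theorem laplacian_abs_pow_formula
    (n : ℕ) (hn : 1 ≤ n) (p : ℝ) (hp : 4 ≤ p)
    (f : EuclideanSpace ℂ (Fin n) → ℂ)
    (hf : ContDiffOn ℝ 2 f (ball 0 1)) :
    (∀ z ∈ ball (0 : EuclideanSpace ℂ (Fin n)) 1,
      lap (fun w => ‖f w‖ ^ p) z =
        p * (p - 2) * ‖f z‖ ^ (p - 4) *
            (∑ k : Fin n, ‖wz f k z * conj (f z) + conj (wzb f k z) * f z‖ ^ 2) +
          2 * p * ‖f z‖ ^ (p - 2) * Dnorm f z ^ 2 +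
          p * ‖f z‖ ^ (p - 2) * (f z * conj (lap f z)).re) ∧
    ((∀ z ∈ ball (0 : EuclideanSpace ℂ (Fin n)) 1, 0 ≤ (f z * conj (lap f z)).re) →
      ∀ z ∈ ball (0 : EuclideanSpace ℂ (Fin n)) 1, 0 ≤ lap (fun w => ‖f w‖ ^ p) z) := by
  have main : ∀ z ∈ ball (0 : EuclideanSpace ℂ (Fin n)) 1,
      lap (fun w => ‖f w‖ ^ p) z =
        p * (p - 2) * ‖f z‖ ^ (p - 4) *
            (∑ k : Fin n, ‖wz f k z * conj (f z) + conj (wzb f k z) * f z‖ ^ 2) +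
          2 * p * ‖f z‖ ^ (p - 2) * Dnorm f z ^ 2 +
          p * ‖f z‖ ^ (p - 2) * (f z * conj (lap f z)).re := by
    intro z hz
    have e1 : ∀ c : ℝ, ((f z).re^2 + (f z).im^2) ^ c = ‖f z‖ ^ (2*c) := by
      intro c
      have h1 : ((f z).re^2 + (f z).im^2) = ‖f z‖ ^ (2:ℕ) := by
        rw [Complex.sq_norm, Complex.normSq_apply]; ring
      rw [h1, ← Real.rpow_natCast ‖f z‖ 2, ← Real.rpow_mul (norm_nonneg _)]
      norm_num
    have hsq : Dnorm f z ^ 2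
        = ∑ k : Fin n, (‖wz f k z‖^2 + ‖wzb f k z‖^2) :=
      Real.sq_sqrt (Finset.sum_nonneg fun k _ => by positivity)
    -- RHS as a single sum
    have hrhs : p * (p - 2) * ‖f z‖ ^ (p - 4) *
            (∑ k : Fin n, ‖wz f k z * conj (f z) + conj (wzb f k z) * f z‖ ^ 2) +
          2 * p * ‖f z‖ ^ (p - 2) * Dnorm f z ^ 2 +
          p * ‖f z‖ ^ (p - 2) * (f z * conj (lap f z)).re
        = ∑ k : Fin n,
            (p * (p - 2) * ‖f z‖ ^ (p - 4) *
              ‖wz f k z * conj (f z) + conj (wzb f k z) * f z‖ ^ 2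
            + 2 * p * ‖f z‖ ^ (p - 2) *
              (‖wz f k z‖^2 + ‖wzb f k z‖^2)
            + p * ‖f z‖ ^ (p - 2) *
              (f z * conj (fderiv ℝ (fun w => fderiv ℝ f w (eR n k)) z (eR n k)
                + fderiv ℝ (fun w => fderiv ℝ f w (eI n k)) z (eI n k))).re) := by
      rw [hsq, lap, map_sum]
      simp only [Finset.mul_sum, Complex.re_sum]
      rw [← Finset.sum_add_distrib, ← Finset.sum_add_distrib]
    rw [hrhs, lap]
    refine Finset.sum_congr rfl fun k _ => ?_
    rw [second_deriv_formula p hp f _ isOpen_ball hf z hz (eR n k),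
        second_deriv_formula p hp f _ isOpen_ball hf z hz (eI n k),
        e1 (p/2 - 2), e1 (p/2 - 1),
        show 2*(p/2 - 2) = p - 4 by ring, show 2*(p/2 - 1) = p - 2 by ring]
    have := key_alg p (‖f z‖ ^ (p-4)) (‖f z‖ ^ (p-2)) (f z)
      (fderiv ℝ f z (eR n k)) (fderiv ℝ f z (eI n k))
      (fderiv ℝ (fun w => fderiv ℝ f w (eR n k)) z (eR n k))
      (fderiv ℝ (fun w => fderiv ℝ f w (eI n k)) z (eI n k))
    simp only [wz, wzb]
    linear_combination this
  refine ⟨main, fun hpos z hz => ?_⟩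
  rw [main z hz]
  have h2 : (0:ℝ) ≤ ‖f z‖ ^ (p - 2) := Real.rpow_nonneg (norm_nonneg _) _
  have h4 : (0:ℝ) ≤ ‖f z‖ ^ (p - 4) := Real.rpow_nonneg (norm_nonneg _) _
  have hpp : (0:ℝ) ≤ p * (p - 2) := by nlinarith
  refine add_nonneg (add_nonneg ?_ ?_) ?_
  · exact mul_nonneg (mul_nonneg hpp h4) (Finset.sum_nonneg fun k _ => by positivity)
  · exact mul_nonneg (mul_nonneg (by linarith) h2) (sq_nonneg _)
  · exact mul_nonneg (mul_nonneg (by linarith) h2) (hpos z hz)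
end
end

section
/- Let λ₁, …, λ_n be real constants, α ≥ 0, p ≥ 4, and let f ∈ C²(𝔹ⁿ; ℂ) satisfy ∂f/∂z̄_k = λ_k |f|^α on 𝔹ⁿ for every k ∈ {1,…,n}. Then at every point of 𝔹ⁿ, Δ(|f|^p) ≥ [4p − (2−α)²]·|f|^{p+2α−2}·Σ_{k=1}^n λ_k². -/
open MeasureTheory Metric Complex Set Asymptotics ComplexConjugate

noncomputable section

/-- Core algebraic inequality. -/
lemma key_ineq (q a l e2 epr X Y P1r P1i : ℝ) (hq : 2 ≤ q)
    (he2 : 0 ≤ e2) (hepr : 0 ≤ epr) (hc : 0 < epr * (X ^ 2 + Y ^ 2)) :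
    (8 * q - (2 - a) ^ 2) * l ^ 2 * ((e2 * (X ^ 2 + Y ^ 2)) * (epr * (X ^ 2 + Y ^ 2)) ^ 2)
      ≤ q * (q - 1) * e2 *
          ((2 * (X * P1r + Y * P1i)) ^ 2
            + (2 * (X * (-P1i) + Y * (P1r - 2 * l * (epr * (X ^ 2 + Y ^ 2))))) ^ 2)
        + q * (e2 * (X ^ 2 + Y ^ 2)) *
          (2 * P1r ^ 2 + 2 * P1i ^ 2 + 2 * (-P1i) ^ 2
            + 2 * (P1r - 2 * l * (epr * (X ^ 2 + Y ^ 2))) ^ 2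
            + 2 * X * (2 * l * ((a / 2) * epr * (2 * (X * P1r + Y * P1i))))
            + 2 * Y * (-(2 * l * ((a / 2) * epr *
                (2 * (X * (-P1i) + Y * (P1r - 2 * l * (epr * (X ^ 2 + Y ^ 2))))))))) := by
  have hu0 : 0 < X ^ 2 + Y ^ 2 := by
    rcases lt_or_ge 0 (X ^ 2 + Y ^ 2) with h | h
    · exact h
    · exfalso; nlinarith
  have heprp : 0 < epr := by
    rcases lt_or_ge 0 epr with h | h
    · exact h
    · exfalso; nlinarith
  set u0 : ℝ := X ^ 2 + Y ^ 2 with hu0def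
  set c : ℝ := epr * u0 with hcdef
  set Ar : ℝ := P1r - l * c with hAr
  set R : ℝ := Ar * (X ^ 2 - Y ^ 2) + 2 * P1i * X * Y with hR
  have hdiff : 0 ≤ ((q * (q - 1) * e2 *
          ((2 * (X * P1r + Y * P1i)) ^ 2
            + (2 * (X * (-P1i) + Y * (P1r - 2 * l * c))) ^ 2)
        + q * (e2 * u0) *
          (2 * P1r ^ 2 + 2 * P1i ^ 2 + 2 * (-P1i) ^ 2
            + 2 * (P1r - 2 * l * c) ^ 2
            + 2 * X * (2 * l * ((a / 2) * epr * (2 * (X * P1r + Y * P1i))))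
            + 2 * Y * (-(2 * l * ((a / 2) * epr *
                (2 * (X * (-P1i) + Y * (P1r - 2 * l * c))))))))
      - (8 * q - (2 - a) ^ 2) * l ^ 2 * ((e2 * u0) * c ^ 2)) * c ^ 2 := by
    have hident : ((q * (q - 1) * e2 *
          ((2 * (X * P1r + Y * P1i)) ^ 2
            + (2 * (X * (-P1i) + Y * (P1r - 2 * l * c))) ^ 2)
        + q * (e2 * u0) *
          (2 * P1r ^ 2 + 2 * P1i ^ 2 + 2 * (-P1i) ^ 2
            + 2 * (P1r - 2 * l * c) ^ 2
            + 2 * X * (2 * l * ((a / 2) * epr * (2 * (X * P1r + Y * P1i))))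
            + 2 * Y * (-(2 * l * ((a / 2) * epr *
                (2 * (X * (-P1i) + Y * (P1r - 2 * l * c))))))))
      - (8 * q - (2 - a) ^ 2) * l ^ 2 * ((e2 * u0) * c ^ 2)) * c ^ 2
        = (e2 * u0) * (2 * q * epr * R + (2 * q - 2 + a) * l * c ^ 2) ^ 2
          + (2 * q) ^ 2 * (e2 * u0) * epr ^ 2 *
              (P1i * (X ^ 2 - Y ^ 2) - 2 * Ar * X * Y) ^ 2 := by
      rw [hR, hAr, hcdef, hu0def]; ring
    rw [hident]; positivity
  have hc2 : 0 < c ^ 2 := by positivity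
  nlinarith [hdiff, hc2]

set_option maxHeartbeats 4000000 in
theorem nonlinear_pde_laplacian_lower_bound
    (n : ℕ) (hn : 1 ≤ n) (lam : Fin n → ℝ) (α : ℝ) (hα : 0 ≤ α) (p : ℝ) (hp : 4 ≤ p)
    (f : EuclideanSpace ℂ (Fin n) → ℂ)
    (hf : ContDiffOn ℝ 2 f (ball 0 1))
    (hpde : ∀ k : Fin n, ∀ z ∈ ball (0 : EuclideanSpace ℂ (Fin n)) 1,
      wzb f k z = (lam k : ℂ) * ((‖f z‖ ^ α : ℝ) : ℂ)) :
    ∀ z ∈ ball (0 : EuclideanSpace ℂ (Fin n)) 1,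
      (4 * p - (2 - α) ^ 2) * ‖f z‖ ^ (p + 2 * α - 2) * (∑ k : Fin n, lam k ^ 2) ≤
        lap (fun w => ‖f w‖ ^ p) z := by
  intro z hz
  have hso : IsOpen (ball (0 : EuclideanSpace ℂ (Fin n)) 1) := isOpen_ball
  have hsnz : ball (0 : EuclideanSpace ℂ (Fin n)) 1 ∈ nhds z := hso.mem_nhds hz
  set q : ℝ := p / 2 with hq_def
  have hq2 : 2 ≤ q := by rw [hq_def]; linarith
  -- differentiability of f and its derivative
  have hfd : ∀ w ∈ ball (0 : EuclideanSpace ℂ (Fin n)) 1, DifferentiableAt ℝ f w := fun w hw =>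
    (hf.contDiffAt (hso.mem_nhds hw)).differentiableAt (by norm_num)
  set Φ : EuclideanSpace ℂ (Fin n) → (EuclideanSpace ℂ (Fin n) →L[ℝ] ℂ) := fderiv ℝ f with hΦdef
  have hΦc : ContDiffAt ℝ 1 Φ z := (hf.contDiffAt hsnz).fderiv_right (by norm_num)
  have hΦz : HasFDerivAt Φ (fderiv ℝ Φ z) z := (hΦc.differentiableAt one_ne_zero).hasFDerivAt
  set HΦ : EuclideanSpace ℂ (Fin n) →L[ℝ] EuclideanSpace ℂ (Fin n) →L[ℝ] ℂ :=
    fderiv ℝ Φ z with hHΦdef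
  have hΦv : ∀ v, HasFDerivAt (fun w => Φ w v)
      ((ContinuousLinearMap.apply ℝ ℂ v).comp HΦ) z := by
    intro v
    have := (ContinuousLinearMap.apply ℝ ℂ v).hasFDerivAt.comp z hΦz
    simpa [Function.comp_def] using this
  -- real and imaginary parts
  set fr : EuclideanSpace ℂ (Fin n) → ℝ := fun w => (f w).re with hfrdef
  set fi : EuclideanSpace ℂ (Fin n) → ℝ := fun w => (f w).im with hfidef
  have hfrd : ∀ w ∈ ball (0 : EuclideanSpace ℂ (Fin n)) 1,
      HasFDerivAt fr (Complex.reCLM.comp (Φ w)) w := by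
    intro w hw
    simpa [Function.comp_def] using Complex.reCLM.hasFDerivAt.comp w (hfd w hw).hasFDerivAt
  have hfid : ∀ w ∈ ball (0 : EuclideanSpace ℂ (Fin n)) 1,
      HasFDerivAt fi (Complex.imCLM.comp (Φ w)) w := by
    intro w hw
    simpa [Function.comp_def] using Complex.imCLM.hasFDerivAt.comp w (hfd w hw).hasFDerivAt
  set u : EuclideanSpace ℂ (Fin n) → ℝ := fun w => fr w ^ 2 + fi w ^ 2 with hudef
  have h_u_norm : ∀ w, u w = ‖f w‖ ^ (2 : ℕ) := by
    intro w
    rw [hudef]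
    simp only [hfrdef, hfidef, Complex.sq_norm, Complex.normSq_apply]
    ring
  set Du : EuclideanSpace ℂ (Fin n) → (EuclideanSpace ℂ (Fin n) →L[ℝ] ℝ) := fun w =>
    (2 * fr w) • (Complex.reCLM.comp (Φ w)) + (2 * fi w) • (Complex.imCLM.comp (Φ w)) with hDudef
  have hDu : ∀ w ∈ ball (0 : EuclideanSpace ℂ (Fin n)) 1, HasFDerivAt u (Du w) w := by
    intro w hw
    have h1 := ((hfrd w hw).mul (hfrd w hw)).add ((hfid w hw).mul (hfid w hw))
    have heq : (fun w => fr w * fr w + fi w * fi w) = u := by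
      funext w'; rw [hudef]; ring
    simp only [Pi.add_def, Pi.mul_def] at h1
    rw [heq] at h1
    refine h1.congr_fderiv ?_
    ext x
    simp [hDudef]
    try ring
  have hDu_apply : ∀ w v, Du w v = 2 * fr w * (Φ w v).re + 2 * fi w * (Φ w v).im := by
    intro w v; rw [hDudef]; simp; try ring
  -- pass from ‖f‖ ^ p to u ^ q
  have hg_eq : (fun w : EuclideanSpace ℂ (Fin n) => ‖f w‖ ^ p) = fun w => u w ^ q := by
    funext w
    rw [h_u_norm w, ← Real.rpow_natCast ‖f w‖ 2, ← Real.rpow_mul (norm_nonneg _)]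
    rw [hq_def]
    congr 1
    ring
  -- derivative of u ^ q
  have hgw : ∀ w ∈ ball (0 : EuclideanSpace ℂ (Fin n)) 1,
      HasFDerivAt (fun w' => u w' ^ q) ((q * u w ^ (q - 1)) • Du w) w := by
    intro w hw
    have h1 := (Real.hasDerivAt_rpow_const (x := u w) (p := q)
      (Or.inr (by linarith))).comp_hasFDerivAt w (hDu w hw)
    simpa [Function.comp_def] using h1
  have h_ev : ∀ v, (fun w => fderiv ℝ (fun w' => u w' ^ q) w v)
      =ᶠ[nhds z] fun w => (q * u w ^ (q - 1)) * (Du w v) := by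
    intro v
    filter_upwards [hsnz] with w hw
    rw [(hgw w hw).fderiv]
    simp
  have hrev : ∀ v, HasFDerivAt (fun w => (Φ w v).re)
      (Complex.reCLM.comp ((ContinuousLinearMap.apply ℝ ℂ v).comp HΦ)) z := by
    intro v
    simpa [Function.comp_def] using Complex.reCLM.hasFDerivAt.comp z (hΦv v)
  have himv : ∀ v, HasFDerivAt (fun w => (Φ w v).im)
      (Complex.imCLM.comp ((ContinuousLinearMap.apply ℝ ℂ v).comp HΦ)) z := by
    intro v
    simpa [Function.comp_def] using Complex.imCLM.hasFDerivAt.comp z (hΦv v)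
  -- the second-derivative formula for u ^ q
  have hT : ∀ v, fderiv ℝ (fun w => fderiv ℝ (fun w' => u w' ^ q) w v) z v
      = q * (q - 1) * u z ^ (q - 2) * (Du z v) ^ 2
        + q * u z ^ (q - 1) * (2 * (Φ z v).re ^ 2 + 2 * (Φ z v).im ^ 2
            + 2 * fr z * (HΦ v v).re + 2 * fi z * (HΦ v v).im) := by
    intro v
    rw [(h_ev v).fderiv_eq]
    have hA : HasFDerivAt (fun w => q * u w ^ (q - 1))
        ((q * ((q - 1) * u z ^ (q - 1 - 1))) • Du z) z := by
      have h2 := (Real.hasDerivAt_rpow_const (x := u z) (p := q - 1)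
        (Or.inr (by linarith))).comp_hasFDerivAt z (hDu z hz)
      have h3 := h2.const_mul q
      simpa [Function.comp, smul_smul] using h3
    have hBfun : (fun w => Du w v) = fun w => 2 * fr w * (Φ w v).re + 2 * fi w * (Φ w v).im :=
      funext fun w => hDu_apply w v
    have hB := ((((hfrd z hz).const_mul (2:ℝ)).mul (hrev v)).add
      (((hfid z hz).const_mul (2:ℝ)).mul (himv v)))
    simp only [Pi.add_def, Pi.mul_def] at hB
    rw [← hBfun] at hB
    have hprod := hA.mul hB
    simp only [Pi.mul_def] at hprod
    rw [hprod.fderiv]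
    have hq12 : q - 1 - 1 = q - 2 := by ring
    rw [hq12]
    simp [hDu_apply]
    ring
  -- rewrite the goal
  rw [hg_eq]
  simp only [lap]
  by_cases hF : f z = 0
  case pos =>
    -- at a zero of f both sides vanish
    have hfrz : fr z = 0 := by rw [hfrdef]; simp [hF]
    have hfiz : fi z = 0 := by rw [hfidef]; simp [hF]
    have hu0 : u z = 0 := by rw [hudef]; simp [hfrz, hfiz]
    have hDuz : ∀ v, Du z v = 0 := by
      intro v; rw [hDu_apply, hfrz, hfiz]; ring
    have hTz : ∀ v, fderiv ℝ (fun w => fderiv ℝ (fun w' => u w' ^ q) w v) z v = 0 := by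
      intro v
      rw [hT v, hDuz v, hu0, hfrz, hfiz, Real.zero_rpow (by intro h; linarith [h] : q - 1 ≠ 0)]
      ring
    have hLHS : ‖f z‖ ^ (p + 2 * α - 2) = 0 := by
      rw [hF]
      simp only [norm_zero]
      exact Real.zero_rpow (by intro h; linarith [h])
    rw [hLHS]
    have : ∀ k : Fin n, k ∈ Finset.univ →
        (0:ℝ) ≤ fderiv ℝ (fun w => fderiv ℝ (fun w' => u w' ^ q) w (eR n k)) z (eR n k)
          + fderiv ℝ (fun w => fderiv ℝ (fun w' => u w' ^ q) w (eI n k)) z (eI n k) := by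
      intro k _
      rw [hTz (eR n k), hTz (eI n k)]
      norm_num
    have hsum := Finset.sum_nonneg this
    calc (4 * p - (2 - α) ^ 2) * 0 * (∑ k : Fin n, lam k ^ 2) = 0 := by ring
      _ ≤ _ := hsum
  case neg =>
    -- the main case : f z ≠ 0
    have hu0pos : 0 < u z := by
      rw [h_u_norm z]
      have : 0 < ‖f z‖ := norm_pos_iff.2 hF
      positivity
    -- norm-power conversions
    have h_rpR : ∀ w, ‖f w‖ ^ α = u w ^ (α / 2) := by
      intro w
      rw [h_u_norm w, ← Real.rpow_natCast ‖f w‖ 2, ← Real.rpow_mul (norm_nonneg _)]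
      congr 1
      ring
    have h_rp : ∀ w, ((‖f w‖ ^ α : ℝ) : ℂ) = ((u w ^ (α / 2) : ℝ) : ℂ) := fun w => by
      rw [h_rpR w]
    have hnormp : ‖f z‖ ^ (p + 2 * α - 2) = u z ^ (q + α - 1) := by
      rw [h_u_norm z, ← Real.rpow_natCast ‖f z‖ 2, ← Real.rpow_mul (norm_nonneg _)]
      congr 1
      rw [hq_def]; ring
    -- rpow bookkeeping
    have hA1 : u z ^ (q - 1) = u z ^ (q - 2) * u z := by
      rw [show q - 1 = (q - 2) + 1 by ring, Real.rpow_add hu0pos, Real.rpow_one]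
    have hapr : u z ^ (α / 2) = u z ^ (α / 2 - 1) * u z := by
      have h := Real.rpow_add hu0pos (α / 2 - 1) 1
      rw [Real.rpow_one] at h
      rw [← h]
      congr 1
      ring
    have hcα : ‖f z‖ ^ α = u z ^ (α / 2 - 1) * u z := by rw [h_rpR z, hapr]
    have het : u z ^ (q + α - 1)
        = u z ^ (q - 1) * (u z ^ (α / 2) * u z ^ (α / 2)) := by
      rw [← Real.rpow_add hu0pos, ← Real.rpow_add hu0pos]
      congr 1
      ring
    -- symmetry of the second derivative
    have hsym : ∀ v v', HΦ v v' = HΦ v' v := by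
      intro v v'
      refine second_derivative_symmetric_of_eventually (f := f) ?_ hΦz v v'
      filter_upwards [hsnz] with w hw
      exact (hfd w hw).hasFDerivAt
    have hu0e : u z = fr z ^ 2 + fi z ^ 2 := by rw [hudef]
    -- per-direction-pair estimate
    have key : ∀ k : Fin n,
        (4 * p - (2 - α) ^ 2) * u z ^ (q + α - 1) * lam k ^ 2
          ≤ fderiv ℝ (fun w => fderiv ℝ (fun w' => u w' ^ q) w (eR n k)) z (eR n k)
            + fderiv ℝ (fun w => fderiv ℝ (fun w' => u w' ^ q) w (eI n k)) z (eI n k) := by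
      intro k
      set v1 := eR n k with hv1
      set v2 := eI n k with hv2
      -- the PDE near z, in local form
      have hpe : (fun w => (2 : ℂ)⁻¹ * (Φ w v1) + ((2 : ℂ)⁻¹ * Complex.I) * (Φ w v2))
          =ᶠ[nhds z] fun w => ((lam k : ℝ) : ℂ) * ((u w ^ (α / 2) : ℝ) : ℂ) := by
        filter_upwards [hsnz] with w hw
        have h1 := hpde k w hw
        rw [h_rp w] at h1
        rw [← h1]
        show _ = wzb f k w
        rw [wzb]
        ring
      have hL : HasFDerivAt (fun w => (2 : ℂ)⁻¹ * (Φ w v1) + ((2 : ℂ)⁻¹ * Complex.I) * (Φ w v2))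
          ((2 : ℂ)⁻¹ • ((ContinuousLinearMap.apply ℝ ℂ v1).comp HΦ)
            + ((2 : ℂ)⁻¹ * Complex.I) • ((ContinuousLinearMap.apply ℝ ℂ v2).comp HΦ)) z :=
        ((hΦv v1).const_mul ((2:ℂ)⁻¹)).add ((hΦv v2).const_mul ((2:ℂ)⁻¹ * Complex.I))
      have hR : HasFDerivAt (fun w => ((lam k : ℝ) : ℂ) * ((u w ^ (α / 2) : ℝ) : ℂ))
          (((lam k : ℝ) : ℂ) •
            (Complex.ofRealCLM.comp ((α / 2 * u z ^ (α / 2 - 1)) • Du z))) z := by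
        have s1 : HasDerivAt (fun t : ℝ => t ^ (α / 2)) (α / 2 * u z ^ (α / 2 - 1)) (u z) :=
          Real.hasDerivAt_rpow_const (Or.inl hu0pos.ne')
        have s2 := s1.comp_hasFDerivAt z (hDu z hz)
        have s3 := Complex.ofRealCLM.hasFDerivAt.comp z s2
        have s4 := s3.const_mul ((lam k : ℝ) : ℂ)
        simpa [Function.comp] using s4
      have hfeq := hpe.fderiv_eq (𝕜 := ℝ)
      rw [hL.fderiv, hR.fderiv] at hfeq
      have E1 := congrArg (fun (L : EuclideanSpace ℂ (Fin n) →L[ℝ] ℂ) => L v1) hfeq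
      have E2 := congrArg (fun (L : EuclideanSpace ℂ (Fin n) →L[ℝ] ℂ) => L v2) hfeq
      simp only [ContinuousLinearMap.add_apply, ContinuousLinearMap.coe_smul',
        Pi.smul_apply, ContinuousLinearMap.comp_apply, ContinuousLinearMap.apply_apply,
        smul_eq_mul, ContinuousLinearMap.coe_comp', Function.comp_apply,
        Complex.ofRealCLM_apply, ContinuousLinearMap.smul_apply] at E1 E2
      have hHsum : HΦ v1 v1 + HΦ v2 v2
          = 2 * ((lam k : ℝ) : ℂ) * ((α / 2 * u z ^ (α / 2 - 1) * Du z v1 : ℝ) : ℂ)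
            - 2 * Complex.I * ((lam k : ℝ) : ℂ)
              * ((α / 2 * u z ^ (α / 2 - 1) * Du z v2 : ℝ) : ℂ) := by
        have hs := hsym v1 v2
        push_cast at E1 E2 ⊢
        linear_combination (2:ℂ) * E1 - 2 * Complex.I * E2 - Complex.I * hs
          + (HΦ v2 v2) * Complex.I_sq
      have hre : (HΦ v1 v1).re + (HΦ v2 v2).re
          = 2 * lam k * (α / 2 * u z ^ (α / 2 - 1) * Du z v1) := by
        have h0 := congrArg Complex.re hHsum
        simp [Complex.add_re, Complex.sub_re, Complex.mul_re, Complex.mul_im] at h0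
        linarith [h0]
      have him : (HΦ v1 v1).im + (HΦ v2 v2).im
          = -(2 * lam k * (α / 2 * u z ^ (α / 2 - 1) * Du z v2)) := by
        have h0 := congrArg Complex.im hHsum
        simp [Complex.add_im, Complex.sub_im, Complex.mul_re, Complex.mul_im] at h0
        linarith [h0]
      -- the PDE constraint at z itself
      have hpz : Φ z v1 + Complex.I * Φ z v2 = 2 * ((lam k : ℝ) : ℂ) * ((‖f z‖ ^ α : ℝ) : ℂ) := by
        have h1 := hpde k z hz
        rw [wzb] at h1
        linear_combination (2:ℂ) * h1
      have hpre : (Φ z v1).re - (Φ z v2).im = 2 * lam k * ‖f z‖ ^ α := by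
        have h0 := congrArg Complex.re hpz
        simp [Complex.add_re, Complex.mul_re, Complex.mul_im] at h0
        linarith [h0]
      have hpim : (Φ z v1).im + (Φ z v2).re = 0 := by
        have h0 := congrArg Complex.im hpz
        simp [Complex.add_im, Complex.mul_re, Complex.mul_im] at h0
        linarith [h0]
      have hp2re : (Φ z v2).re = -(Φ z v1).im := by linarith
      have hp2im : (Φ z v2).im = (Φ z v1).re - 2 * lam k * ‖f z‖ ^ α := by linarith
      -- combine the two second derivatives
      have hTT : fderiv ℝ (fun w => fderiv ℝ (fun w' => u w' ^ q) w v1) z v1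
          + fderiv ℝ (fun w => fderiv ℝ (fun w' => u w' ^ q) w v2) z v2
          = q * (q - 1) * u z ^ (q - 2) * ((Du z v1) ^ 2 + (Du z v2) ^ 2)
            + q * u z ^ (q - 1) * (2 * (Φ z v1).re ^ 2 + 2 * (Φ z v1).im ^ 2
              + 2 * (Φ z v2).re ^ 2 + 2 * (Φ z v2).im ^ 2
              + 2 * fr z * (2 * lam k * (α / 2 * u z ^ (α / 2 - 1) * Du z v1))
              + 2 * fi z * (-(2 * lam k * (α / 2 * u z ^ (α / 2 - 1) * Du z v2)))) := by
        rw [hT v1, hT v2]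
        linear_combination (2 * q * u z ^ (q - 1) * fr z) * hre
          + (2 * q * u z ^ (q - 1) * fi z) * him
      rw [hTT, hDu_apply z v1, hDu_apply z v2, hp2re, hp2im, hcα,
        show (4 : ℝ) * p = 8 * q by rw [hq_def]; ring,
        het, hapr, hA1]
      have he2 : (0:ℝ) ≤ u z ^ (q - 2) := Real.rpow_nonneg hu0pos.le _
      have hepr : (0:ℝ) ≤ u z ^ (α / 2 - 1) := Real.rpow_nonneg hu0pos.le _
      have hcpos : (0:ℝ) < u z ^ (α / 2 - 1) * u z :=
        mul_pos (Real.rpow_pos_of_pos hu0pos _) hu0pos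
      have KI := key_ineq q α (lam k) (u z ^ (q - 2)) (u z ^ (α / 2 - 1)) (fr z) (fi z)
        (Φ z v1).re (Φ z v1).im hq2 he2 hepr (by rw [← hu0e]; exact hcpos)
      rw [← hu0e] at KI
      nlinarith [KI]
    rw [hnormp, Finset.mul_sum]
    exact Finset.sum_le_sum (fun k _ => key k)
end
end
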